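/- Let m ≥ 2, ω = e^{2πi/m}, 1 ≤ j ≤ m−1, and let d_n(q) = ∑_{k=0}^{n} (−1)^k q^{\binom{k}{2}} ∏_{t=k+1}^{n} [t]_q. Then for all n, |d_n(ω^j)| ≤ (m−1)(2/c)^{(m−2)/2}, where c = min{1 − cos(2πj'/m) : 1 ≤ j' ≤ m−1}. -/

import Mathlib

open Complex Finset Real

/-- Gessel's formula for the major index generating function over derangements,
evaluated at `q : ℂ`. -/
noncomputable def dGF (n : ℕ) (q : ℂ) : ℂ :=
  ∑ k ∈ Finset.range (n + 1), (-1) ^ k * q ^ (Nat.choose k 2) *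
    ∏ t ∈ Finset.Icc (k + 1) n, (∑ i ∈ Finset.range t, q ^ i)

theorem stmt_8 (m : ℕ) (hm : 2 ≤ m)
    (ω : ℂ) (hω : ω = Complex.exp (2 * Real.pi * Complex.I / m))
    (j : ℕ) (hj1 : 1 ≤ j) (hj2 : j ≤ m - 1)
    (hne : (Finset.Icc 1 (m - 1)).Nonempty)
    (c : ℝ)
    (hc : c = (Finset.Icc 1 (m - 1)).inf' hne
      (fun j' => 1 - Real.cos (2 * Real.pi * j' / m))) :
    ∀ n : ℕ, ‖dGF n (ω ^ j)‖ ≤ (m - 1 : ℝ) * (2 / c) ^ (((m : ℝ) - 2) / 2) := by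
  have hm0 : (0:ℝ) < (m:ℝ) := by positivity
  have hmR : (2:ℝ) ≤ (m:ℝ) := by exact_mod_cast hm
  have hmC : (m:ℂ) ≠ 0 := Nat.cast_ne_zero.mpr (by omega : m ≠ 0)
  set q : ℂ := ω ^ j with hq
  set θ : ℝ := 2 * Real.pi * j / m with hθ
  -- cos < 1 on the relevant range
  have hcos : ∀ j' ∈ Finset.Icc 1 (m-1), Real.cos (2 * Real.pi * j' / m) < 1 := by
    intro j' hj'
    rcases Finset.mem_Icc.mp hj' with ⟨h1, h2⟩
    rcases lt_or_eq_of_le (Real.cos_le_one (2 * Real.pi * j' / m)) with h | h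
    · exact h
    · exfalso
      rcases (Real.cos_eq_one_iff _).mp h with ⟨k, hk⟩
      have hj'0 : (1:ℝ) ≤ (j':ℝ) := by exact_mod_cast h1
      have hj'm : (j':ℝ) < (m:ℝ) := by
        have : j' < m := by omega
        exact_mod_cast this
      have hpi := Real.pi_pos
      have hx0 : 0 < 2 * Real.pi * j' / m := by positivity
      have hx2 : 2 * Real.pi * j' / m < 2 * Real.pi := by
        rw [div_lt_iff₀ hm0]
        nlinarith
      have hk0 : (0:ℝ) < (k:ℝ) := by nlinarith
      have hk1 : (1:ℝ) ≤ (k:ℝ) := by exact_mod_cast (by exact_mod_cast hk0 : (0:ℤ) < k)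
      nlinarith
  have hcpos : 0 < c := by
    rw [hc, Finset.lt_inf'_iff]
    intro i hi
    have := hcos i hi
    linarith
  have hjmem : j ∈ Finset.Icc 1 (m-1) := Finset.mem_Icc.mpr ⟨hj1, hj2⟩
  have hcle : c ≤ 1 - Real.cos θ := by
    rw [hc, hθ]
    exact Finset.inf'_le _ hjmem
  have hcosθ : Real.cos θ < 1 := by linarith
  have hc2 : c ≤ 2 := by
    have := Real.neg_one_le_cos θ
    linarith
  -- q as exp(θ I)
  have hqexp : q = Complex.exp (θ * Complex.I) := by
    rw [hq, hω, ← Complex.exp_nat_mul]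
    congr 1
    rw [hθ]
    push_cast
    field_simp
  have habsq : ‖q‖ = 1 := by
    rw [hqexp, Complex.norm_exp]
    simp
  have hqre : q.re = Real.cos θ := by rw [hqexp]; exact Complex.exp_ofReal_mul_I_re θ
  have hqim : q.im = Real.sin θ := by rw [hqexp]; exact Complex.exp_ofReal_mul_I_im θ
  have hq1 : q ≠ 1 := by
    intro h
    rw [h] at hqre
    simp at hqre
    linarith
  have hnormsq : ‖q - 1‖ ^ 2 = 2 - 2 * Real.cos θ := by
    have h1 := Real.sin_sq_add_cos_sq θ
    rw [Complex.sq_norm, Complex.normSq_apply, Complex.sub_re, Complex.sub_im,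
      Complex.one_re, Complex.one_im, hqre, hqim]
    nlinarith
  have hqdist : Real.sqrt (2*c) ≤ ‖q - 1‖ := by
    have h2 : 2*c ≤ ‖q-1‖^2 := by rw [hnormsq]; linarith
    calc Real.sqrt (2*c) ≤ Real.sqrt (‖q-1‖^2) := Real.sqrt_le_sqrt h2
      _ = ‖q-1‖ := Real.sqrt_sq (norm_nonneg _)
  have hqd0 : 0 < ‖q - 1‖ :=
    lt_of_lt_of_le (Real.sqrt_pos.mpr (by linarith)) hqdist
  set X : ℝ := Real.sqrt (2/c) with hX
  have h2c1 : (1:ℝ) ≤ 2/c := by rw [le_div_iff₀ hcpos]; linarith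
  have hX1 : (1:ℝ) ≤ X := by
    rw [hX, show (1:ℝ) = Real.sqrt 1 from (Real.sqrt_one).symm]
    exact Real.sqrt_le_sqrt h2c1
  have hX0 : (0:ℝ) ≤ X := by linarith
  -- bound each geometric sum
  have hS : ∀ t : ℕ, ‖∑ i ∈ Finset.range t, q ^ i‖ ≤ X := by
    intro t
    rw [geom_sum_eq hq1, norm_div, div_le_iff₀ hqd0]
    have h1 : ‖q^t - 1‖ ≤ 2 := by
      have h := norm_sub_le (q^t) (1:ℂ)
      simp only [habsq, one_pow, norm_pow,
        norm_one] at h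
      linarith
    have h2 : 2 ≤ X * ‖q-1‖ := by
      have h4 : (2:ℝ) = Real.sqrt ((2/c) * (2*c)) := by
        rw [show (2/c)*(2*c) = 4 by field_simp; ring]
        rw [show (4:ℝ) = 2^2 by norm_num, Real.sqrt_sq (by norm_num : (0:ℝ) ≤ 2)]
      rw [h4, Real.sqrt_mul (by positivity) _]
      exact mul_le_mul_of_nonneg_left hqdist hX0
    linarith
  -- q^m = 1
  have hωm : ω ^ m = 1 := by
    rw [hω, ← Complex.exp_nat_mul,
      show (m:ℂ) * (2*(Real.pi:ℂ)*Complex.I/(m:ℂ)) = 2*(Real.pi:ℂ)*Complex.I by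
        field_simp]
    exact Complex.exp_two_pi_mul_I
  have hqm : q ^ m = 1 := by
    rw [hq, ← pow_mul, mul_comm, pow_mul, hωm, one_pow]
  -- main argument
  intro n
  set a : ℕ := m * (n / m) with ha
  set r : ℕ := n % m with hr
  have han : a + r = n := Nat.div_add_mod n m
  have hrm : r < m := Nat.mod_lt n (by omega)
  have hqa : q ^ a = 1 := by rw [ha, pow_mul, hqm, one_pow]
  have hSa : (∑ i ∈ Finset.range a, q ^ i) = 0 := by
    rw [geom_sum_eq hq1, hqa]
    simp
  have hSa1 : (∑ i ∈ Finset.range (a+1), q ^ i) = 1 := by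
    rw [geom_sum_eq hq1, pow_succ, hqa, one_mul]
    exact div_self (sub_ne_zero.mpr hq1)
  have haln : a ≤ n := by omega
  have hdGF : dGF n q = ∑ k ∈ Finset.Ico a (n+1),
      ((-1:ℂ)^k * q^(Nat.choose k 2) * ∏ t ∈ Finset.Icc (k+1) n, ∑ i ∈ Finset.range t, q^i) := by
    rw [dGF]
    refine (Finset.sum_subset (fun x hx => ?_) (fun k hk hkn => ?_)).symm
    · rw [Finset.mem_Ico] at hx
      rw [Finset.mem_range]
      omega
    · rw [Finset.mem_range] at hk
      rw [Finset.mem_Ico] at hkn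
      have hka : k < a := by omega
      have hz0 : (∏ t ∈ Finset.Icc (k+1) n, ∑ i ∈ Finset.range t, q^i) = 0 :=
        Finset.prod_eq_zero (Finset.mem_Icc.mpr ⟨by omega, haln⟩) hSa
      rw [hz0, mul_zero]
  -- RHS basics
  set Y : ℝ := (2 / c) ^ (((m : ℝ) - 2) / 2) with hY
  have hXY : X ^ (m-2) = Y := by
    rw [hX, hY, Real.sqrt_eq_rpow, ← Real.rpow_natCast ((2/c) ^ ((1:ℝ)/2)) (m-2),
      ← Real.rpow_mul (by positivity)]
    congr 1
    have hcast : ((m-2 : ℕ):ℝ) = (m:ℝ) - 2 := by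
      push_cast [Nat.cast_sub hm]
      ring
    rw [hcast]
    ring
  have hY1 : (1:ℝ) ≤ Y := by
    rw [hY, show (1:ℝ) = (2/c) ^ (0:ℝ) from (Real.rpow_zero _).symm]
    exact Real.rpow_le_rpow_of_exponent_le h2c1 (by linarith)
  rcases Nat.eq_zero_or_pos r with hr0 | hr1
  · -- r = 0 : only term k = n = a survives
    have han' : a = n := by omega
    rw [hdGF, han', show Finset.Ico n (n+1) = {n} by
      rw [Finset.Ico_add_one_right_eq_Icc, Finset.Icc_self]]
    rw [Finset.sum_singleton, Finset.Icc_eq_empty (by omega), Finset.prod_empty, mul_one,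
      norm_mul, norm_pow, norm_pow, norm_neg, norm_one, habsq, one_pow, one_pow, mul_one]
    nlinarith
  · -- r ≥ 1 : the first two surviving terms cancel
    have ha1n : a + 1 ≤ n := by omega
    have hch : Nat.choose (a+1) 2 = a + Nat.choose a 2 := by
      rw [Nat.choose_succ_succ, Nat.choose_one_right]
    have hq2 : q ^ Nat.choose (a+1) 2 = q ^ Nat.choose a 2 := by
      rw [hch, pow_add, hqa, one_mul]
    have hprod : (∏ t ∈ Finset.Icc (a+1) n, ∑ i ∈ Finset.range t, q^i)
        = ∏ t ∈ Finset.Icc (a+2) n, ∑ i ∈ Finset.range t, q^i := by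
      rw [← Finset.Ico_add_one_right_eq_Icc (a+1) n,
        Finset.prod_eq_prod_Ico_succ_bot (by omega : a+1 < n+1), hSa1, one_mul]
      rw [show a+1+1 = a+2 from rfl, ← Finset.Ico_add_one_right_eq_Icc (a+2) n]
    have hfirst : ∑ k ∈ Finset.Ico a (a+2),
        ((-1:ℂ)^k * q^(Nat.choose k 2) * ∏ t ∈ Finset.Icc (k+1) n, ∑ i ∈ Finset.range t, q^i) = 0 := by
      have hset : Finset.Ico a (a+2) = {a, a+1} := by
        ext x
        simp only [Finset.mem_Ico, Finset.mem_insert, Finset.mem_singleton]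
        omega
      rw [hset, Finset.sum_insert (by simp), Finset.sum_singleton]
      rw [hprod, hq2, pow_succ, show a+1+1 = a+2 from rfl]
      ring
    have hsplit2 : dGF n q = ∑ k ∈ Finset.Ico (a+2) (n+1),
        ((-1:ℂ)^k * q^(Nat.choose k 2) * ∏ t ∈ Finset.Icc (k+1) n, ∑ i ∈ Finset.range t, q^i) := by
      rw [hdGF, ← Finset.sum_Ico_consecutive _ (by omega : a ≤ a+2) (by omega : a+2 ≤ n+1),
        hfirst, zero_add]
    rw [hsplit2]
    have hterm : ∀ k ∈ Finset.Ico (a+2) (n+1),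
        ‖(-1:ℂ)^k * q^(Nat.choose k 2) *
          ∏ t ∈ Finset.Icc (k+1) n, ∑ i ∈ Finset.range t, q^i‖ ≤ X ^ (m-2) := by
      intro k hk
      rcases Finset.mem_Ico.mp hk with ⟨hk1, hk2⟩
      rw [norm_mul, norm_mul, norm_pow, norm_pow, norm_neg, norm_one, habsq,
        one_pow, one_pow, one_mul, one_mul, norm_prod]
      calc (∏ t ∈ Finset.Icc (k+1) n, ‖∑ i ∈ Finset.range t, q^i‖)
          ≤ ∏ t ∈ Finset.Icc (k+1) n, X :=
            Finset.prod_le_prod (fun t _ => norm_nonneg _) (fun t _ => hS t)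
        _ = X ^ (Finset.Icc (k+1) n).card := Finset.prod_const X
        _ ≤ X ^ (m-2) := by
            apply pow_le_pow_right₀ hX1
            rw [Nat.card_Icc]
            omega
    calc ‖∑ k ∈ Finset.Ico (a+2) (n+1),
          ((-1:ℂ)^k * q^(Nat.choose k 2) * ∏ t ∈ Finset.Icc (k+1) n, ∑ i ∈ Finset.range t, q^i)‖
        ≤ ∑ k ∈ Finset.Ico (a+2) (n+1),
          ‖(-1:ℂ)^k * q^(Nat.choose k 2) *
            ∏ t ∈ Finset.Icc (k+1) n, ∑ i ∈ Finset.range t, q^i‖ :=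
          norm_sum_le _ _
      _ ≤ (Finset.Ico (a+2) (n+1)).card • (X ^ (m-2)) :=
          Finset.sum_le_card_nsmul _ _ _ hterm
      _ = ((Finset.Ico (a+2) (n+1)).card : ℝ) * X ^ (m-2) := nsmul_eq_mul _ _
      _ ≤ ((m:ℝ) - 1) * Y := by
          rw [hXY]
          apply mul_le_mul_of_nonneg_right _ (by linarith)
          rw [Nat.card_Ico]
          have hle : n + 1 - (a+2) ≤ m - 2 := by omega
          calc ((n + 1 - (a+2) : ℕ) : ℝ) ≤ ((m - 2 : ℕ) : ℝ) := by exact_mod_cast hle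
            _ ≤ (m:ℝ) - 1 := by
                rw [Nat.cast_sub hm]
                push_cast
                linarith
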